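/- Let B^M(L₁,L₂,ℓ) = (1/(2L₁))(F(L₁−L₂−ℓ) + F(L₁+L₂−ℓ) − F(−L₁+L₂−ℓ) − F(−L₁−L₂−ℓ)) with F(x) = 2 log(1+e^{x/2}). Then 0 < B^M(L₁,L₂,ℓ) < 1 for all L₁, L₂, ℓ > 0, and for every s ≥ 0 there is M_s with B^M(L₁,L₂,ℓ) ≤ M_s·(1+L₁)(1+L₂)/(1 + max(ℓ − L₁ − L₂, 0))^s. -/

import Mathlib

noncomputable def mir_f (x : ℝ) : ℝ := 2 * Real.log (1 + Real.exp (x / 2))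

lemma mir_f_lt {x y : ℝ} (h : x < y) : mir_f x < mir_f y := by
  unfold mir_f
  have h1 : (0:ℝ) < 1 + Real.exp (x/2) := by positivity
  have h2 : Real.exp (x/2) < Real.exp (y/2) := Real.exp_lt_exp.2 (by linarith)
  have := Real.log_lt_log h1 (show 1 + Real.exp (x/2) < 1 + Real.exp (y/2) by linarith)
  linarith

lemma mir_f_id (x : ℝ) : mir_f x = x + mir_f (-x) := by
  unfold mir_f
  have h1 : (0:ℝ) < 1 + Real.exp (-x/2) := by positivity
  have key : 1 + Real.exp (x/2) = Real.exp (x/2) * (1 + Real.exp (-x/2)) := by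
    rw [mul_add, mul_one, ← Real.exp_add, show x/2 + -x/2 = (0:ℝ) by ring, Real.exp_zero]
    ring
  rw [key, Real.log_mul (Real.exp_ne_zero _) (ne_of_gt h1), Real.log_exp]
  ring

lemma mir_f_sub_le {x y : ℝ} (h : x ≤ y) :
    mir_f y - mir_f x ≤ (y - x) * Real.exp (y/2) := by
  unfold mir_f
  set p := Real.exp (x/2) with hp
  set q := Real.exp (y/2) with hq
  have hp0 : 0 < p := Real.exp_pos _
  have hq0 : 0 < q := Real.exp_pos _
  have hpq : p ≤ q := Real.exp_le_exp.2 (by linarith)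
  have hratio : (0:ℝ) < (1+q)/(1+p) := by positivity
  have hlog := Real.log_le_sub_one_of_pos hratio
  have hdiv : Real.log ((1+q)/(1+p)) = Real.log (1+q) - Real.log (1+p) :=
    Real.log_div (by positivity) (by positivity)
  have h2 : (1+q)/(1+p) - 1 = (q-p)/(1+p) := by field_simp; ring
  have h3 : (q-p)/(1+p) ≤ q - p := by
    apply div_le_self (by linarith) (by linarith)
  -- q - p ≤ q * (y-x)/2
  have hpe : p = q * Real.exp ((x-y)/2) := by
    rw [hp, hq, ← Real.exp_add]; ring_nf
  have h4 : q - p ≤ q * ((y-x)/2) := by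
    have := Real.add_one_le_exp ((x-y)/2)
    nlinarith
  nlinarith [hlog, hdiv, h2, h3]

lemma mir_f_conv {c₁ c₂ L : ℝ} (h : c₁ < c₂) (hL : 0 < L) :
    mir_f (c₁+L) - mir_f (c₁-L) < mir_f (c₂+L) - mir_f (c₂-L) := by
  unfold mir_f
  set p := Real.exp (c₁/2) with hp
  set q := Real.exp (c₂/2) with hq
  set r := Real.exp (L/2) with hr
  set t := Real.exp (-L/2) with ht
  have hp0 : 0 < p := Real.exp_pos _
  have hq0 : 0 < q := Real.exp_pos _
  have hpq : p < q := Real.exp_lt_exp.2 (by linarith)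
  have hr1 : 1 < r := by
    rw [hr]
    have := Real.exp_lt_exp.2 (show (0:ℝ) < L/2 by linarith)
    simpa [Real.exp_zero] using this
  have ht1 : t < 1 := by
    rw [ht]; exact Real.exp_lt_one_iff.mpr (by linarith)
  have ht0 : 0 < t := Real.exp_pos _
  have hrt : r * t = 1 := by rw [hr, ht, ← Real.exp_add]; ring_nf; exact Real.exp_zero
  have e1 : Real.exp ((c₁+L)/2) = p * r := by rw [hp, hr, ← Real.exp_add]; ring_nf
  have e2 : Real.exp ((c₂-L)/2) = q * t := by rw [hq, ht, ← Real.exp_add]; ring_nf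
  have e3 : Real.exp ((c₂+L)/2) = q * r := by rw [hq, hr, ← Real.exp_add]; ring_nf
  have e4 : Real.exp ((c₁-L)/2) = p * t := by rw [hp, ht, ← Real.exp_add]; ring_nf
  rw [e1, e2, e3, e4]
  have key : (1 + p*r) * (1 + q*t) < (1 + q*r) * (1 + p*t) := by nlinarith
  have l1 : Real.log (1+p*r) + Real.log (1+q*t) = Real.log ((1+p*r)*(1+q*t)) :=
    (Real.log_mul (by positivity) (by positivity)).symm
  have l2 : Real.log (1+q*r) + Real.log (1+p*t) = Real.log ((1+q*r)*(1+p*t)) :=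
    (Real.log_mul (by positivity) (by positivity)).symm
  have := Real.log_lt_log (by positivity) key
  linarith

theorem mirzakhani_B_bounds
    (F : ℝ → ℝ) (hF : ∀ x, F x = 2 * Real.log (1 + Real.exp (x / 2)))
    (B : ℝ → ℝ → ℝ → ℝ)
    (hB : ∀ L₁ L₂ ℓ : ℝ, B L₁ L₂ ℓ = (1 / (2 * L₁)) *
      (F (L₁ - L₂ - ℓ) + F (L₁ + L₂ - ℓ) - F (-L₁ + L₂ - ℓ) - F (-L₁ - L₂ - ℓ))) :
    (∀ L₁ L₂ ℓ : ℝ, 0 < L₁ → 0 < L₂ → 0 < ℓ → 0 < B L₁ L₂ ℓ ∧ B L₁ L₂ ℓ < 1) ∧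
    (∀ s : ℝ, 0 ≤ s → ∃ Ms : ℝ, 0 < Ms ∧ ∀ L₁ L₂ ℓ : ℝ, 0 < L₁ → 0 < L₂ → 0 < ℓ →
      B L₁ L₂ ℓ ≤ Ms * (1 + L₁) * (1 + L₂) / (1 + max (ℓ - L₁ - L₂) 0) ^ s) := by
  have hf : ∀ x, F x = mir_f x := fun x => hF x
  have hBe : ∀ L₁ L₂ ℓ : ℝ, B L₁ L₂ ℓ = (1 / (2 * L₁)) *
      (mir_f (L₁ - L₂ - ℓ) + mir_f (L₁ + L₂ - ℓ) - mir_f (-L₁ + L₂ - ℓ)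
        - mir_f (-L₁ - L₂ - ℓ)) := by
    intro L₁ L₂ ℓ; rw [hB]; simp only [hf]
  have part1 : ∀ L₁ L₂ ℓ : ℝ, 0 < L₁ → 0 < L₂ → 0 < ℓ →
      0 < B L₁ L₂ ℓ ∧ B L₁ L₂ ℓ < 1 := by
    intro L₁ L₂ ℓ h1 h2 h3
    rw [hBe]
    have hL : 0 < 1 / (2 * L₁) := by positivity
    have c1 : mir_f (-L₁ + L₂ - ℓ) < mir_f (L₁ + L₂ - ℓ) := mir_f_lt (by linarith)
    have c2 : mir_f (-L₁ - L₂ - ℓ) < mir_f (L₁ - L₂ - ℓ) := mir_f_lt (by linarith)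
    constructor
    · exact mul_pos hL (by linarith)
    · have i1 : mir_f (L₁ + L₂ - ℓ) = (L₁ + L₂ - ℓ) + mir_f (-(L₁ + L₂ - ℓ)) := mir_f_id _
      have i2 : mir_f (-L₁ + L₂ - ℓ) = (-L₁ + L₂ - ℓ) + mir_f (-(-L₁ + L₂ - ℓ)) := mir_f_id _
      rw [show -(L₁ + L₂ - ℓ) = (ℓ - L₂) - L₁ by ring] at i1
      rw [show -(-L₁ + L₂ - ℓ) = (ℓ - L₂) + L₁ by ring] at i2
      have conv : mir_f ((-L₂ - ℓ) + L₁) - mir_f ((-L₂ - ℓ) - L₁)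
          < mir_f ((ℓ - L₂) + L₁) - mir_f ((ℓ - L₂) - L₁) := mir_f_conv (by linarith) h1
      rw [show (-L₂ - ℓ) + L₁ = L₁ - L₂ - ℓ by ring,
        show (-L₂ - ℓ) - L₁ = -L₁ - L₂ - ℓ by ring] at conv
      have hS : mir_f (L₁ - L₂ - ℓ) + mir_f (L₁ + L₂ - ℓ) - mir_f (-L₁ + L₂ - ℓ)
          - mir_f (-L₁ - L₂ - ℓ) < 2 * L₁ := by linarith
      calc (1 / (2 * L₁)) * (mir_f (L₁ - L₂ - ℓ) + mir_f (L₁ + L₂ - ℓ)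
            - mir_f (-L₁ + L₂ - ℓ) - mir_f (-L₁ - L₂ - ℓ))
          < (1 / (2 * L₁)) * (2 * L₁) := by
            exact mul_lt_mul_of_pos_left hS hL
        _ = 1 := by field_simp
  refine ⟨part1, ?_⟩
  intro s hs
  set n : ℕ := max 1 ⌈s⌉₊ with hn
  have hn1 : 1 ≤ n := le_max_left _ _
  have hn0 : (0:ℝ) < (n:ℝ) := by exact_mod_cast hn1.trans_lt' (by norm_num)
  refine ⟨2 * (2 * (n:ℝ)) ^ n, by positivity, ?_⟩
  intro L₁ L₂ ℓ h1 h2 h3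
  set t := max (ℓ - L₁ - L₂) 0 with htd
  have ht0 : 0 ≤ t := le_max_right _ _
  have hA : B L₁ L₂ ℓ ≤ 2 * Real.exp (-t / 2) := by
    rcases le_or_gt ℓ (L₁ + L₂) with hc | hc
    · have htz : t = 0 := max_eq_right (by linarith)
      rw [htz]
      norm_num
      have := (part1 L₁ L₂ ℓ h1 h2 h3).2
      linarith
    · have htv : t = ℓ - L₁ - L₂ := max_eq_left (by linarith)
      rw [hBe]
      have hL : 0 < 1 / (2 * L₁) := by positivity
      have d1 : mir_f (L₁ + L₂ - ℓ) - mir_f (-L₁ + L₂ - ℓ)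
          ≤ (2 * L₁) * Real.exp ((L₁ + L₂ - ℓ) / 2) := by
        have h := mir_f_sub_le (show -L₁ + L₂ - ℓ ≤ L₁ + L₂ - ℓ by linarith)
        rw [show (L₁ + L₂ - ℓ) - (-L₁ + L₂ - ℓ) = 2 * L₁ by ring] at h
        exact h
      have d2 : mir_f (L₁ - L₂ - ℓ) - mir_f (-L₁ - L₂ - ℓ)
          ≤ (2 * L₁) * Real.exp ((L₁ + L₂ - ℓ) / 2) := by
        have h := mir_f_sub_le (show -L₁ - L₂ - ℓ ≤ L₁ - L₂ - ℓ by linarith)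
        rw [show (L₁ - L₂ - ℓ) - (-L₁ - L₂ - ℓ) = 2 * L₁ by ring] at h
        have hee : Real.exp ((L₁ - L₂ - ℓ) / 2) ≤ Real.exp ((L₁ + L₂ - ℓ) / 2) :=
          Real.exp_le_exp.2 (by linarith)
        nlinarith
      have hS : mir_f (L₁ - L₂ - ℓ) + mir_f (L₁ + L₂ - ℓ) - mir_f (-L₁ + L₂ - ℓ)
          - mir_f (-L₁ - L₂ - ℓ) ≤ (4 * L₁) * Real.exp ((L₁ + L₂ - ℓ) / 2) := by linarith
      have hte : (L₁ + L₂ - ℓ) / 2 = -t / 2 := by rw [htv]; ring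
      rw [hte] at hS
      calc (1 / (2 * L₁)) * (mir_f (L₁ - L₂ - ℓ) + mir_f (L₁ + L₂ - ℓ)
            - mir_f (-L₁ + L₂ - ℓ) - mir_f (-L₁ - L₂ - ℓ))
          ≤ (1 / (2 * L₁)) * ((4 * L₁) * Real.exp (-t / 2)) :=
            mul_le_mul_of_nonneg_left hS hL.le
        _ = 2 * Real.exp (-t / 2) := by field_simp; ring
  have hP : (1 + t) ^ s ≤ (2 * (n:ℝ)) ^ n * Real.exp (t / 2) := by
    have hne : (2 * (n:ℝ)) ≠ 0 := by positivity
    have hexp : 1 + t / (2 * (n:ℝ)) ≤ Real.exp (t / (2 * (n:ℝ))) := by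
      have := Real.add_one_le_exp (t / (2 * (n:ℝ)))
      linarith
    have base : (1:ℝ) + t ≤ (2 * (n:ℝ)) * Real.exp (t / (2 * (n:ℝ))) := by
      have hmul : (2 * (n:ℝ)) * (1 + t / (2 * (n:ℝ))) = 2 * (n:ℝ) + t := by
        field_simp
      have hcast : (1:ℝ) ≤ (n:ℝ) := by exact_mod_cast hn1
      have := mul_le_mul_of_nonneg_left hexp (show (0:ℝ) ≤ 2 * (n:ℝ) by positivity)
      linarith
    have hpow : (1 + t) ^ n ≤ ((2 * (n:ℝ)) * Real.exp (t / (2 * (n:ℝ)))) ^ n :=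
      pow_le_pow_left₀ (by linarith) base n
    have heq : ((2 * (n:ℝ)) * Real.exp (t / (2 * (n:ℝ)))) ^ n
        = (2 * (n:ℝ)) ^ n * Real.exp (t / 2) := by
      rw [mul_pow, ← Real.exp_nat_mul]
      congr 1
      field_simp
    have hsn : s ≤ (n:ℝ) := by
      calc s ≤ (⌈s⌉₊ : ℝ) := Nat.le_ceil s
        _ ≤ (n:ℝ) := by exact_mod_cast le_max_right 1 ⌈s⌉₊
    have hrpow : (1 + t) ^ s ≤ (1 + t) ^ ((n:ℕ):ℝ) :=
      Real.rpow_le_rpow_of_exponent_le (by linarith) hsn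
    rw [Real.rpow_natCast] at hrpow
    calc (1 + t) ^ s ≤ (1 + t) ^ n := hrpow
      _ ≤ _ := heq ▸ hpow
  have hD : 0 < (1 + t) ^ s := Real.rpow_pos_of_pos (by linarith) s
  rw [div_eq_mul_inv, ← div_eq_mul_inv, le_div_iff₀ hD]
  have he1 : Real.exp (-t / 2) * Real.exp (t / 2) = 1 := by
    rw [← Real.exp_add, show -t / 2 + t / 2 = (0:ℝ) by ring, Real.exp_zero]
  have hBnn : 0 ≤ B L₁ L₂ ℓ := (part1 L₁ L₂ ℓ h1 h2 h3).1.le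
  have step1 : B L₁ L₂ ℓ * (1 + t) ^ s ≤ (2 * Real.exp (-t / 2)) * ((2 * (n:ℝ)) ^ n * Real.exp (t / 2)) := by
    calc B L₁ L₂ ℓ * (1 + t) ^ s ≤ (2 * Real.exp (-t / 2)) * (1 + t) ^ s :=
        mul_le_mul_of_nonneg_right hA hD.le
      _ ≤ _ := mul_le_mul_of_nonneg_left hP (by positivity)
  have step2 : (2 * Real.exp (-t / 2)) * ((2 * (n:ℝ)) ^ n * Real.exp (t / 2))
      = 2 * (2 * (n:ℝ)) ^ n := by
    have : 2 * Real.exp (-t / 2) * ((2 * (n:ℝ)) ^ n * Real.exp (t / 2))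
        = 2 * (2 * (n:ℝ)) ^ n * (Real.exp (-t / 2) * Real.exp (t / 2)) := by ring
    rw [this, he1, mul_one]
  have hfin : (2:ℝ) * (2 * (n:ℝ)) ^ n ≤ 2 * (2 * (n:ℝ)) ^ n * (1 + L₁) * (1 + L₂) := by
    have hx : (0:ℝ) < 2 * (2 * (n:ℝ)) ^ n := by positivity
    have h12 : (1:ℝ) ≤ (1 + L₁) * (1 + L₂) := by nlinarith
    calc 2 * (2 * (n:ℝ)) ^ n = 2 * (2 * (n:ℝ)) ^ n * 1 := (mul_one _).symm
      _ ≤ 2 * (2 * (n:ℝ)) ^ n * ((1 + L₁) * (1 + L₂)) :=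
          mul_le_mul_of_nonneg_left h12 hx.le
      _ = 2 * (2 * (n:ℝ)) ^ n * (1 + L₁) * (1 + L₂) := by ring
  linarith [step1, step2, hfin]
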